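/- Let C be a connected graph in which every block is a clique or an odd cycle (a Gallai tree), and let L be a list assignment with |L(v)| = deg_C(v) for every vertex v. If some terminal block B of C contains two vertices u, w with deg_C(u) = deg_C(w) and L(u) ≠ L(w), then C has a proper L-coloring. -/

import Mathlib

/-- `v` is a cut vertex of a connected graph `G`: deleting `v` disconnects the graph. -/
def IsCutVertex {V : Type*} (G : SimpleGraph V) (v : V) : Prop :=
  G.Connected ∧ ¬ (G.induce {w : V | w ≠ v}).Connected


/-- A set `S` induces a block of `G`. -/
def IsBlock {V : Type*} (G : SimpleGraph V) (S : Set V) : Prop :=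
  (G.induce S).Connected ∧ (∀ v : S, ¬ IsCutVertex (G.induce S) v) ∧
    ∀ T : Set V, S ⊂ T → (G.induce T).Connected → ∃ v : T, IsCutVertex (G.induce T) v

/-- A terminal block is a block containing at most one cut vertex of `G`. -/
def IsTerminalBlock {V : Type*} (G : SimpleGraph V) (S : Set V) : Prop :=
  IsBlock G S ∧ (S ∩ {v : V | IsCutVertex G v}).Subsingleton


section Aux
open SimpleGraph

/-- Greedy list coloring along a list: if each vertex's list is larger than its
number of earlier neighbors in the list, a proper partial coloring exists. -/
lemma greedy {V : Type*} [DecidableEq V] (C : SimpleGraph V) [DecidableRel C.Adj] :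
    ∀ (l : List V) (L : V → Finset ℕ), l.Nodup →
    (∀ i (hi : i < l.length),
      ((l.take i).countP (fun z => decide (C.Adj (l.get ⟨i, hi⟩) z))) < (L (l.get ⟨i, hi⟩)).card) →
    ∃ φ : V → ℕ, (∀ v ∈ l, φ v ∈ L v) ∧ (∀ x ∈ l, ∀ y ∈ l, C.Adj x y → φ x ≠ φ y) := by
  intro l
  induction l with
  | nil => exact fun L _ _ => ⟨fun _ => 0, by simp, by simp⟩
  | cons v t ih =>
    intro L hnd hcond
    have hv0 : 0 < (L v).card := by
      have := hcond 0 (by simp)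
      simpa using this
    obtain ⟨c, hc⟩ := Finset.card_pos.mp hv0
    set L' : V → Finset ℕ := fun z => if C.Adj v z then L z \ {c} else L z with hL'
    have hcond' : ∀ i (hi : i < t.length),
        ((t.take i).countP (fun z => decide (C.Adj (t.get ⟨i, hi⟩) z))) < (L' (t.get ⟨i, hi⟩)).card := by
      intro i hi
      have h := hcond (i+1) (by simpa using Nat.succ_lt_succ hi)
      have hget : (v :: t).get ⟨i+1, by simpa using Nat.succ_lt_succ hi⟩ = t.get ⟨i, hi⟩ := rfl
      rw [hget] at h
      have htake : (v :: t).take (i+1) = v :: t.take i := rfl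
      rw [htake, List.countP_cons] at h
      set z := t.get ⟨i, hi⟩
      by_cases hadj : C.Adj v z
      · have hadj' : C.Adj z v := hadj.symm
        rw [if_pos (by simpa using hadj')] at h
        have hcard : (L z).card ≤ (L z \ {c}).card + 1 := by
          have : L z ⊆ (L z \ {c}) ∪ {c} := by
            intro x hx
            by_cases hxc : x = c
            · simp [hxc]
            · simp [Finset.mem_sdiff, hx, hxc]
          calc (L z).card ≤ ((L z \ {c}) ∪ {c}).card := Finset.card_le_card this
            _ ≤ (L z \ {c}).card + ({c} : Finset ℕ).card := Finset.card_union_le _ _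
            _ = (L z \ {c}).card + 1 := by simp
        simp only [hL', hadj, if_true]
        omega
      · have hadj' : ¬ C.Adj z v := fun h' => hadj h'.symm
        rw [if_neg (by simpa using hadj')] at h
        simp only [hL', hadj, if_false]
        omega
    obtain ⟨φ, hφmem, hφprop⟩ := ih L' hnd.of_cons hcond'
    have hvt : v ∉ t := (List.nodup_cons.mp hnd).1
    refine ⟨Function.update φ v c, ?_, ?_⟩
    · intro z hz
      rcases List.mem_cons.mp hz with rfl | hz
      · simpa using hc
      · have hzv : z ≠ v := fun h => hvt (h ▸ hz)
        rw [Function.update_of_ne hzv]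
        have := hφmem z hz
        by_cases hadj : C.Adj v z
        · simp only [hL', hadj, if_true] at this
          exact (Finset.mem_sdiff.mp this).1
        · simpa [hL', hadj] using this
    · intro x hx y hy hadjxy
      by_cases hxv : x = v <;> by_cases hyv : y = v
      · exact absurd hadjxy (by rw [hxv, hyv]; exact C.irrefl)
      · subst hxv
        have hy' : y ∈ t := (List.mem_cons.mp hy).resolve_left hyv
        rw [Function.update_self, Function.update_of_ne hyv]
        have hmem := hφmem y hy'
        simp only [hL', hadjxy, if_true] at hmem
        have hne := (Finset.mem_sdiff.mp hmem).2
        simp only [Finset.mem_singleton] at hne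
        exact fun h => hne h.symm
      · subst hyv
        have hx' : x ∈ t := (List.mem_cons.mp hx).resolve_left hxv
        rw [Function.update_of_ne hxv, Function.update_self]
        have hmem := hφmem x hx'
        simp only [hL', hadjxy.symm, if_true] at hmem
        have hne := (Finset.mem_sdiff.mp hmem).2
        simpa using hne
      · have hx' : x ∈ t := (List.mem_cons.mp hx).resolve_left hxv
        have hy' : y ∈ t := (List.mem_cons.mp hy).resolve_left hyv
        rw [Function.update_of_ne hxv, Function.update_of_ne hyv]
        exact hφprop x hx' y hy' hadjxy

/-- In a connected graph, any vertex other than `b` has a neighbor strictly closer to `b`. -/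
lemma exists_closer {W : Type*} (G : SimpleGraph W) (hG : G.Connected) (x b : W) (hxb : x ≠ b) :
    ∃ z, G.Adj x z ∧ G.dist z b < G.dist x b := by
  obtain ⟨p, hp⟩ := (hG x b).exists_walk_length_eq_dist
  cases p with
  | nil => exact absurd rfl hxb
  | cons h q =>
    refine ⟨_, h, ?_⟩
    have h1 : G.dist _ b ≤ q.length := SimpleGraph.dist_le q
    have h2 : q.length + 1 = G.dist x b := by simpa using hp
    omega

/-- Along a walk whose vertices map to non-cut vertices with pairwise list inclusions,
all lists agree. -/
lemma walk_const {V α : Type*} (C : SimpleGraph V) (H : SimpleGraph α) (L : V → Finset ℕ)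
    (g : α → V)
    (hadj : ∀ x y : α, H.Adj x y → C.Adj (g x) (g y))
    (hsub : ∀ p q : V, C.Adj p q → ¬ IsCutVertex C p → L p ⊆ L q)
    (hnc : ∀ x : α, ¬ IsCutVertex C (g x)) :
    ∀ {x y : α}, H.Walk x y → L (g x) = L (g y) := by
  intro x y p
  induction p with
  | nil => rfl
  | @cons x m y h q ih =>
    have h1 : L (g x) ⊆ L (g m) := hsub _ _ (hadj _ _ h) (hnc x)
    have h2 : L (g m) ⊆ L (g x) := hsub _ _ (hadj _ _ h).symm (hnc m)
    rw [← ih, Finset.Subset.antisymm h1 h2]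

lemma colorExtend {V : Type*} [Fintype V] [DecidableEq V] (C : SimpleGraph V)
    [DecidableRel C.Adj] (hconn : C.Connected)
    (L : V → Finset ℕ) (hL : ∀ v, (L v).card = C.degree v)
    (a b : V) (hab : C.Adj a b) (hnc : ¬ IsCutVertex C a)
    (c : ℕ) (hca : c ∈ L a) (hcb : c ∉ L b) :
    ∃ φ : V → ℕ, (∀ v, φ v ∈ L v) ∧ ∀ x y, C.Adj x y → φ x ≠ φ y := by
  classical
  have hG' : (C.induce {z : V | z ≠ a}).Connected := not_not.mp (fun h => hnc ⟨hconn, h⟩)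
  set G' := C.induce {z : V | z ≠ a} with hG'def
  have hba : b ∈ {z : V | z ≠ a} := hab.ne'
  set b' : ↥{z : V | z ≠ a} := ⟨b, hba⟩ with hb'def
  set key : ↥{z : V | z ≠ a} → ℕ := fun z => G'.dist z b' with hkey
  set r : ↥{z : V | z ≠ a} → ↥{z : V | z ≠ a} → Prop := fun x y => key y ≤ key x with hr
  haveI : DecidableRel r := fun x y => by unfold r; infer_instance
  haveI hTot : IsTotal ↥{z : V | z ≠ a} r := ⟨fun x y => le_total (key y) (key x)⟩
  haveI hTrans : IsTrans ↥{z : V | z ≠ a} r := ⟨fun x y z h1 h2 => le_trans h2 h1⟩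
  set rest0 : List ↥{z : V | z ≠ a} :=
    List.insertionSort r (Finset.univ : Finset ↥{z : V | z ≠ a}).toList with hrest0
  have hnd0 : rest0.Nodup :=
    ((List.perm_insertionSort r _).nodup_iff).mpr (Finset.nodup_toList _)
  have hmem0 : ∀ x : ↥{z : V | z ≠ a}, x ∈ rest0 :=
    fun x => (List.perm_insertionSort r _).mem_iff.mpr (Finset.mem_toList.mpr (Finset.mem_univ x))
  have hsorted : List.Pairwise r rest0 := List.pairwise_insertionSort r _
  set rest : List V := rest0.map Subtype.val with hrest
  have hndr : rest.Nodup := hnd0.map Subtype.val_injective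
  have hmemr : ∀ v : V, v ≠ a → v ∈ rest := by
    intro v hv
    exact List.mem_map.mpr ⟨⟨v, hv⟩, hmem0 _, rfl⟩
  have hnar : a ∉ rest := by
    intro h
    obtain ⟨z, _, hz⟩ := List.mem_map.mp h
    exact z.2 hz
  set L' : V → Finset ℕ := fun z => if C.Adj a z then L z \ {c} else L z with hL'
  have hcard' : ∀ z, (L z).card - (if C.Adj a z then 1 else 0) ≤ (L' z).card := by
    intro z
    by_cases hz : C.Adj a z
    · simp only [hL', hz, if_true]
      have := Finset.card_le_card_sdiff_add_card (s := L z) (t := ({c} : Finset ℕ))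
      simp only [Finset.card_singleton] at this
      omega
    · simp [hL', hz]
  have hcond : ∀ i (hi : i < rest.length),
      ((rest.take i).countP (fun z => decide (C.Adj (rest.get ⟨i, hi⟩) z)))
        < (L' (rest.get ⟨i, hi⟩)).card := by
    intro i hi
    have hi0 : i < rest0.length := by simpa [hrest] using hi
    set v0 : ↥{z : V | z ≠ a} := rest0.get ⟨i, hi0⟩ with hv0
    have hgetr : rest.get ⟨i, hi⟩ = (v0 : V) := by
      simp only [hrest, hv0, List.get_eq_getElem, List.getElem_map]
    set v : V := (v0 : V) with hvdef
    rw [hgetr]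
    -- the counted, filtered list
    set s : List V := (rest.take i).filter (fun z => decide (C.Adj v z)) with hs
    have hsub : s.Sublist rest := List.filter_sublist.trans (List.take_sublist _ _)
    have hnds : s.Nodup := hndr.sublist hsub
    have hcount : (rest.take i).countP (fun z => decide (C.Adj v z)) = s.toFinset.card := by
      rw [List.countP_eq_length_filter, ← hs, List.toFinset_card_of_nodup hnds]
    rw [hcount]
    have hmem_s : ∀ z ∈ s.toFinset, z ∈ C.neighborFinset v ∧ z ≠ a ∧ z ∈ rest.take i := by
      intro z hz
      rw [List.mem_toFinset, hs, List.mem_filter] at hz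
      refine ⟨?_, ?_, hz.1⟩
      · rw [mem_neighborFinset]; exact of_decide_eq_true hz.2
      · intro hza
        exact hnar (hza ▸ (List.take_sublist _ _).mem hz.1)
    by_cases hvb : v0 = b'
    -- case v = b
    · have hvb' : v = b := by rw [hvdef, hvb]
      have haN : a ∈ C.neighborFinset v := by
        rw [mem_neighborFinset, hvb']; exact hab.symm
      have hsubN : s.toFinset ⊆ C.neighborFinset v \ {a} := by
        intro z hz
        obtain ⟨h1, h2, _⟩ := hmem_s z hz
        rw [Finset.mem_sdiff, Finset.mem_singleton]
        exact ⟨h1, h2⟩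
      have hcard1 : s.toFinset.card ≤ C.degree v - 1 := by
        have := Finset.card_le_card hsubN
        rw [Finset.card_sdiff_of_subset (by simpa using haN), Finset.card_singleton,
          C.card_neighborFinset_eq_degree] at this
        exact this
      have hLb : (L' v).card = C.degree v := by
        rw [hL', hvb']
        simp only [hab, if_true]
        rw [← Finset.erase_eq, Finset.erase_eq_of_notMem hcb, hL]
      have hdegpos : 0 < C.degree v := by
        rw [← C.card_neighborFinset_eq_degree]
        exact Finset.card_pos.mpr ⟨a, haN⟩
      omega
    -- case v ≠ b
    · obtain ⟨z0, hadj0, hlt⟩ := exists_closer G' hG' v0 b' hvb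
      have hzadj : C.Adj v (z0 : V) := hadj0
      have hznot : (z0 : V) ∉ rest.take i := by
        intro hzin
        rw [hrest, ← List.map_take] at hzin
        obtain ⟨z1, hz1mem, hz1⟩ := List.mem_map.mp hzin
        have : z1 = z0 := Subtype.val_injective hz1
        subst this
        have hv0drop : v0 ∈ rest0.drop i := by
          have hlen : 0 < (rest0.drop i).length := by simp [List.length_drop]; omega
          have h0 : (rest0.drop i)[0]'hlen = rest0[i]'hi0 := by
            rw [List.getElem_drop]; simp
          rw [hv0, List.get_eq_getElem, ← h0]
          exact List.getElem_mem _
        have := hsorted.rel_of_mem_take_of_mem_drop hz1mem hv0drop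
        rw [hr] at this
        exact absurd hlt (not_lt.mpr this)
      have hzN : (z0 : V) ∈ C.neighborFinset v := by rw [mem_neighborFinset]; exact hzadj
      have hza : (z0 : V) ≠ a := z0.2
      have hsubN : s.toFinset ⊆ C.neighborFinset v \ {a, (z0 : V)} := by
        intro z hz
        obtain ⟨h1, h2, h3⟩ := hmem_s z hz
        rw [Finset.mem_sdiff, Finset.mem_insert, Finset.mem_singleton]
        refine ⟨h1, ?_⟩
        rintro (rfl | rfl)
        · exact h2 rfl
        · exact hznot h3
      by_cases hA : C.Adj a v
      · have haN : a ∈ C.neighborFinset v := by rw [mem_neighborFinset]; exact hA.symm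
        have hpair : ({a, (z0 : V)} : Finset V) ⊆ C.neighborFinset v := by
          intro z hz
          rcases Finset.mem_insert.mp hz with rfl | hz
          · exact haN
          · rw [Finset.mem_singleton.mp hz]; exact hzN
        have hcard2 : ({a, (z0 : V)} : Finset V).card = 2 := by
          rw [Finset.card_insert_of_notMem (by simpa using hza.symm), Finset.card_singleton]
        have hcard1 : s.toFinset.card ≤ C.degree v - 2 := by
          have := Finset.card_le_card hsubN
          rw [Finset.card_sdiff_of_subset hpair, hcard2, C.card_neighborFinset_eq_degree] at this
          exact this
        have hdeg2 : 2 ≤ C.degree v := by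
          rw [← C.card_neighborFinset_eq_degree]
          calc 2 = ({a, (z0 : V)} : Finset V).card := hcard2.symm
            _ ≤ _ := Finset.card_le_card hpair
        have := hcard' v
        rw [hL v] at this
        simp only [hA, if_true] at this
        omega
      · have hcard1 : s.toFinset.card ≤ C.degree v - 1 := by
          have hsubN' : s.toFinset ⊆ C.neighborFinset v \ {(z0 : V)} := by
            intro z hz
            have h1 := hsubN hz
            rw [Finset.mem_sdiff, Finset.mem_insert, Finset.mem_singleton] at h1
            rw [Finset.mem_sdiff, Finset.mem_singleton]
            exact ⟨h1.1, fun h => h1.2 (Or.inr h)⟩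
          have := Finset.card_le_card hsubN'
          rw [Finset.card_sdiff_of_subset (by simpa using hzN), Finset.card_singleton,
            C.card_neighborFinset_eq_degree] at this
          exact this
        have hdeg1 : 1 ≤ C.degree v := by
          rw [← C.card_neighborFinset_eq_degree]
          exact Finset.card_pos.mpr ⟨_, hzN⟩
        have := hcard' v
        rw [hL v] at this
        simp only [hA, if_false] at this
        omega
  obtain ⟨φ, hφmem, hφprop⟩ := greedy C rest L' hndr hcond
  refine ⟨Function.update φ a c, ?_, ?_⟩
  · intro v
    by_cases hva : v = a
    · rw [hva, Function.update_self]; exact hca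
    · rw [Function.update_of_ne hva]
      have := hφmem v (hmemr v hva)
      by_cases hz : C.Adj a v
      · simp only [hL', hz, if_true] at this
        exact (Finset.mem_sdiff.mp this).1
      · simpa [hL', hz] using this
  · intro x y hxy
    by_cases hxa : x = a <;> by_cases hya : y = a
    · exact absurd (hxa ▸ hya ▸ hxy) (C.irrefl)
    · rw [hxa, Function.update_self, Function.update_of_ne hya]
      have := hφmem y (hmemr y hya)
      simp only [hL', hxa ▸ hxy, if_true] at this
      have := (Finset.mem_sdiff.mp this).2
      simp only [Finset.mem_singleton] at this
      exact fun h => this h.symm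
    · rw [hya, Function.update_of_ne hxa, Function.update_self]
      have := hφmem x (hmemr x hxa)
      simp only [hL', hya ▸ hxy.symm, if_true] at this
      have := (Finset.mem_sdiff.mp this).2
      simpa using this
    · rw [Function.update_of_ne hxa, Function.update_of_ne hya]
      exact hφprop x (hmemr x hxa) y (hmemr y hya) hxy

end Aux

/-- Let `C` be a Gallai tree (a connected graph in which every block is a clique or an odd
cycle) and let `L` satisfy `|L(v)| = deg(v)` for every vertex. If some terminal block `B`
contains vertices `u ≠ w` with `deg(u) = deg(w)` and `L(u) ≠ L(w)`, then `C` has a proper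
`L`-coloring. -/
theorem stmt18 {V : Type*} [Fintype V] [DecidableEq V] (C : SimpleGraph V)
    [DecidableRel C.Adj] (hconn : C.Connected)
    (hGallai : ∀ S : Set V, IsBlock C S →
      (∀ u ∈ S, ∀ w ∈ S, u ≠ w → C.Adj u w) ∨
      (∃ m : ℕ, 3 ≤ m ∧ Odd m ∧
        Nonempty (C.induce S ≃g SimpleGraph.cycleGraph m)))
    (L : V → Finset ℕ) (hL : ∀ v, (L v).card = C.degree v)
    (B : Set V) (hB : IsTerminalBlock C B)
    (u w : V) (hu : u ∈ B) (hw : w ∈ B) (huw : u ≠ w)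
    (hdeg : C.degree u = C.degree w) (hLuw : L u ≠ L w) :
    ∃ φ : V → ℕ, (∀ v, φ v ∈ L v) ∧ ∀ a b, C.Adj a b → φ a ≠ φ b := by
  classical
  obtain ⟨⟨hBconn, hBnocut, _⟩, hBsub⟩ := hB
  have key : ∃ p q : V, C.Adj p q ∧ ¬ IsCutVertex C p ∧ (L p \ L q).Nonempty := by
    by_contra hno
    push_neg at hno
    have hsub : ∀ p q : V, C.Adj p q → ¬ IsCutVertex C p → L p ⊆ L q := by
      intro p q h1 h2
      have h3 := hno p q h1 h2
      rwa [Finset.sdiff_eq_empty_iff_subset] at h3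
    by_cases hcx : ∃ x ∈ B, IsCutVertex C x
    · obtain ⟨x, hxB, hxcut⟩ := hcx
      have huniq : ∀ y ∈ B, IsCutVertex C y → y = x := fun y hy hyc =>
        hBsub ⟨hy, hyc⟩ ⟨hxB, hxcut⟩
      have hnx : ¬ IsCutVertex (C.induce B) ⟨x, hxB⟩ := hBnocut ⟨x, hxB⟩
      have hBx : ((C.induce B).induce {t : ↥B | t ≠ ⟨x, hxB⟩}).Connected :=
        not_not.mp (fun h => hnx ⟨hBconn, h⟩)
      have const2 : ∀ p q : V, ∀ (hp : p ∈ B) (hq : q ∈ B), p ≠ x → q ≠ x → L p = L q := by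
        intro p q hp hq hpx hqx
        have hp' : (⟨p, hp⟩ : ↥B) ∈ {t : ↥B | t ≠ ⟨x, hxB⟩} :=
          fun h => hpx (congrArg Subtype.val h)
        have hq' : (⟨q, hq⟩ : ↥B) ∈ {t : ↥B | t ≠ ⟨x, hxB⟩} :=
          fun h => hqx (congrArg Subtype.val h)
        obtain ⟨walkpq⟩ := hBx.preconnected ⟨⟨p, hp⟩, hp'⟩ ⟨⟨q, hq⟩, hq'⟩
        refine walk_const C _ L (fun t => (t.1.1 : V)) (fun s t h => h) hsub ?_ walkpq
        intro t hcut
        exact t.2 (Subtype.ext (huniq t.1.1 t.1.2 hcut))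
      have findnb : ∀ (y : V) (hy : y ∈ B), y ≠ x →
          ∃ p, p ∈ B ∧ C.Adj x p ∧ p ≠ x := by
        intro y hy hyx
        obtain ⟨wk⟩ := hBconn.preconnected ⟨x, hxB⟩ ⟨y, hy⟩
        cases wk with
        | nil => exact absurd rfl hyx.symm
        | @cons _ m _ h q =>
          refine ⟨(m : V), m.2, h, ?_⟩
          intro hmx
          have : (⟨x, hxB⟩ : ↥B) = m := Subtype.ext hmx.symm
          rw [this] at h
          exact (C.induce B).irrefl h
      have hcards : (L u).card = (L w).card := by rw [hL, hL, hdeg]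
      by_cases hux : u = x
      · have hwx : w ≠ x := fun h => huw (hux.trans h.symm)
        obtain ⟨p, hpB, hpadj, hpx⟩ := findnb w hw hwx
        have hnc : ¬ IsCutVertex C p := fun h => hpx (huniq p hpB h)
        have h1 : L p ⊆ L u := by rw [hux]; exact hsub p x hpadj.symm hnc
        have h2 : L w = L p := const2 w p hw hpB hwx hpx
        have h3 : L w ⊆ L u := h2 ▸ h1
        exact hLuw (Finset.eq_of_subset_of_card_le h3 (le_of_eq hcards)).symm
      · by_cases hwx : w = x
        · obtain ⟨p, hpB, hpadj, hpx⟩ := findnb u hu hux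
          have hnc : ¬ IsCutVertex C p := fun h => hpx (huniq p hpB h)
          have h1 : L p ⊆ L w := by rw [hwx]; exact hsub p x hpadj.symm hnc
          have h2 : L u = L p := const2 u p hu hpB hux hpx
          have h3 : L u ⊆ L w := h2 ▸ h1
          exact hLuw (Finset.eq_of_subset_of_card_le h3 (le_of_eq hcards.symm))
        · exact hLuw (const2 u w hu hw hux hwx)
    · push_neg at hcx
      obtain ⟨wk⟩ := hBconn.preconnected ⟨u, hu⟩ ⟨w, hw⟩
      exact hLuw (walk_const C (C.induce B) L (fun t => (t : V)) (fun s t h => h) hsub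
        (fun t => hcx t t.2) wk)
  obtain ⟨p, q, hpq, hpnc, c, hc⟩ := key
  have hc' := Finset.mem_sdiff.mp hc
  exact colorExtend C hconn L hL p q hpq hpnc c hc'.1 hc'.2
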